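/- Let 𝕂 be the quaternions ℍ (or more generally a real composition algebra), and define 𝔤 := 𝕂 ⊕ Im(𝕂) with bracket [z ⊕ z', w ⊕ w'] := 0 ⊕ Im(z w̄) (depending only on the first components). Then 𝔤 is a real Lie algebra, nilpotent of step 2, with center containing 0 ⊕ Im(𝕂), and its first layer 𝕂 contains no 2-dimensional Lie subalgebra: any 2-dimensional subspace S ⊆ 𝕂 ⊕ 0 with [S,S] ⊆ S must be abelian, which forces all elements of S to be pairwise ℝ-proportional, a contradiction. -/

import Mathlib

open Quaternion

lemma aux_dep (z w : Quaternion ℝ) (hw : w ≠ 0) (h : (z * star w).im = 0) :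
    ∃ c : ℝ, z = c • w := by
  have h1 : z * star w = ((z * star w).re : Quaternion ℝ) := by
    conv_lhs => rw [← Quaternion.re_add_im (z * star w)]
    rw [h, add_zero]
  have hn : Quaternion.normSq w ≠ 0 := by
    simpa [Quaternion.normSq_eq_zero] using hw
  have h2 : z * (star w * w) = ((z * star w).re : Quaternion ℝ) * w := by
    rw [← mul_assoc, ← h1]
  rw [Quaternion.star_mul_self, Quaternion.mul_coe_eq_smul,
    Quaternion.coe_mul_eq_smul] at h2
  refine ⟨(z * star w).re / Quaternion.normSq w, ?_⟩
  rw [div_eq_inv_mul, mul_smul, ← h2, inv_smul_smul₀ hn]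

/-- For `𝕂 = ℍ` the quaternions, `𝔤 = 𝕂 ⊕ Im 𝕂` with bracket
`[z ⊕ z', w ⊕ w'] = 0 ⊕ Im(z w̄)` is a real Lie algebra, nilpotent of step 2,
whose center contains the second layer `0 ⊕ Im 𝕂`, and whose first layer
`𝕂 ⊕ 0` contains no 2-dimensional Lie subalgebra. -/
theorem stmt_14
    (br : Quaternion ℝ × Quaternion ℝ → Quaternion ℝ × Quaternion ℝ →
      Quaternion ℝ × Quaternion ℝ)
    (hbr : ∀ x y, br x y = (0, (x.1 * star y.1).im)) :
    -- ℝ-bilinearity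
    (∀ x x' y, br (x + x') y = br x y + br x' y) ∧
    (∀ x y y', br x (y + y') = br x y + br x y') ∧
    (∀ (r : ℝ) x y, br (r • x) y = r • br x y) ∧
    (∀ (r : ℝ) x y, br x (r • y) = r • br x y) ∧
    -- antisymmetry
    (∀ x y, br x y = -br y x) ∧
    -- Jacobi identity
    (∀ x y z, br x (br y z) + br y (br z x) + br z (br x y) = 0) ∧
    -- nilpotency of step 2
    (∀ x y z, br (br x y) z = 0) ∧
    -- the second layer 0 ⊕ Im 𝕂 is central
    (∀ w : Quaternion ℝ, w.re = 0 →
      ∀ x, br (0, w) x = 0 ∧ br x (0, w) = 0) ∧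
    -- the first layer 𝕂 ⊕ 0 contains no 2-dimensional subalgebra
    ¬∃ S : Submodule ℝ (Quaternion ℝ × Quaternion ℝ),
      (∀ x ∈ S, x.2 = 0) ∧ (∀ x ∈ S, ∀ y ∈ S, br x y ∈ S) ∧
      Module.finrank ℝ S = 2 := by
  refine ⟨?_, ?_, ?_, ?_, ?_, ?_, ?_, ?_, ?_⟩
  · intro x x' y; simp [hbr, Prod.ext_iff, add_mul]
  · intro x y y'; simp [hbr, Prod.ext_iff, mul_add]
  · intro r x y; simp [hbr, Prod.ext_iff, smul_mul_assoc]
  · intro r x y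
    simp [hbr, Prod.ext_iff, mul_smul_comm, Quaternion.star_smul]
  · intro x y
    have h : (y.1 * star x.1).im = -(x.1 * star y.1).im := by
      rw [show y.1 * star x.1 = star (x.1 * star y.1) by simp [star_mul],
        Quaternion.im_star]
    simp [hbr, Prod.ext_iff, h]
  · intro x y z; simp [hbr]
  · intro x y z; simp [hbr]
  · intro w _ x; simp [hbr]
  · rintro ⟨S, hS2, hcl, hrank⟩
    have : FiniteDimensional ℝ S := Module.finite_of_finrank_eq_succ hrank
    let b : Module.Basis (Fin 2) ℝ S := Module.finBasisOfFinrankEq ℝ S hrank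
    set u : S := b 0 with hu
    set v : S := b 1 with hv
    have hu2 : (u : Quaternion ℝ × Quaternion ℝ).2 = 0 := hS2 _ u.2
    have hv2 : (v : Quaternion ℝ × Quaternion ℝ).2 = 0 := hS2 _ v.2
    have him : ((u : Quaternion ℝ × Quaternion ℝ).1 *
        star (v : Quaternion ℝ × Quaternion ℝ).1).im = 0 := by
      have h1 := hS2 _ (hcl _ u.2 _ v.2)
      rw [hbr] at h1
      exact h1
    have hv1 : (v : Quaternion ℝ × Quaternion ℝ).1 ≠ 0 := by
      intro h0
      have : (v : Quaternion ℝ × Quaternion ℝ) = 0 := Prod.ext h0 hv2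
      exact b.ne_zero 1 (Subtype.ext this)
    obtain ⟨c, hc⟩ := aux_dep _ _ hv1 him
    have hcoe : (u : Quaternion ℝ × Quaternion ℝ) =
        c • (v : Quaternion ℝ × Quaternion ℝ) := by
      refine Prod.ext hc ?_
      simp [hu2, hv2]
    have heq : u = c • v := Subtype.ext (by simpa using hcoe)
    have h1 := congrArg (fun s : S => (b.repr s) (0 : Fin 2)) heq
    rw [hu, hv] at h1
    simp only [map_smul, Module.Basis.repr_self, Finsupp.smul_apply,
      Finsupp.single_apply] at h1
    norm_num at h1
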